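/- Let k be a commutative ring and A a non-degenerate k-algebra that is projective as a k-module. If x ∈ A ⊗_k A ⊗_k A satisfies (L_a ⊗ id_A ⊗ id_A)(x) = 0 for all a ∈ A, where L_a : A → A is left multiplication by a, then x = 0. -/

import Mathlib

open TensorProduct

lemma stmt_13_aux (k : Type*) [CommRing k]
    (A : Type*) [NonUnitalRing A] [Module k A] [SMulCommClass k A A] [IsScalarTower k A A]
    (g : (A ⊗[k] A) →ₗ[k] k) (a : A) (y : A ⊗[k] (A ⊗[k] A)) :
    a * (TensorProduct.rid k A (g.lTensor A y)) =
      TensorProduct.rid k A (g.lTensor A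
        (TensorProduct.map (LinearMap.mulLeft k a)
          (LinearMap.id : A ⊗[k] A →ₗ[k] A ⊗[k] A) y)) := by
  induction y using TensorProduct.induction_on with
  | zero => simp
  | tmul b n => simp [mul_smul_comm]
  | add y z hy hz => simp only [map_add, mul_add, hy, hz]

/-- Let `A` be a non-degenerate k-algebra which is projective as a
k-module.  If `x ∈ A ⊗ A ⊗ A` satisfies `(L_a ⊗ id ⊗ id)(x) = 0` for all `a ∈ A`, where
`L_a` is left multiplication by `a`, then `x = 0`. -/
theorem stmt_13 (k : Type*) [CommRing k]
    (A : Type*) [NonUnitalRing A] [Module k A] [SMulCommClass k A A] [IsScalarTower k A A]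
    [Module.Projective k A]
    (hnd₁ : ∀ a : A, (∀ b : A, a * b = 0) → a = 0)
    (hnd₂ : ∀ a : A, (∀ b : A, b * a = 0) → a = 0) :
    ∀ x : A ⊗[k] (A ⊗[k] A),
      (∀ a : A,
        TensorProduct.map (LinearMap.mulLeft k a)
          (LinearMap.id : A ⊗[k] A →ₗ[k] A ⊗[k] A) x = 0) →
      x = 0 := by
  intro x hx
  letI : DecidableEq (A ⊗[k] A) := Classical.decEq _
  letI : Zero (A ⊗[k] ((A ⊗[k] A) →₀ k)) :=
    (inferInstance : AddCommMonoid (A ⊗[k] ((A ⊗[k] A) →₀ k))).toZero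
  obtain ⟨s, hs⟩ := Module.projective_def'.mp
    (inferInstance : Module.Projective k (A ⊗[k] A))
  suffices h : LinearMap.lTensor A s x = (0 : A ⊗[k] ((A ⊗[k] A) →₀ k)) by
    have h2 : x = LinearMap.lTensor A (Finsupp.linearCombination k id)
        (LinearMap.lTensor A s x) := by
      rw [← LinearMap.comp_apply, ← LinearMap.lTensor_comp, hs, LinearMap.lTensor_id,
        LinearMap.id_apply]
    rw [h2, h]
    exact (LinearMap.lTensor A (Finsupp.linearCombination k id)).map_zero
  refine (TensorProduct.finsuppScalarRight k k A (A ⊗[k] A)).map_eq_zero_iff.mp ?_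
  ext c
  rw [TensorProduct.finsuppScalarRight_apply, ← LinearMap.comp_apply,
    ← LinearMap.lTensor_comp]
  refine hnd₂ _ fun a => ?_
  rw [AlgebraTensorModule.rid_eq_rid, stmt_13_aux k A ((Finsupp.lapply c) ∘ₗ s) a x, hx a, map_zero, map_zero]
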